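/- Let V_1, ..., V_m be complex n×n matrices satisfying V_1* V_1 + ... + V_m* V_m = Id. Then the following are equivalent: (i) there exists a Hermitian n×n matrix N and functions f_1, ..., f_m : ℝ → ℂ such that V_α = f_α(N) for every α (where f_α(N) is defined via the functional calculus / spectral decomposition of N); (ii) the matrices V_1, ..., V_m mutually commute. -/

import Mathlib

open Matrix

/-- For a Hermitian matrix `N` with spectral decomposition `N = Σ_λ λ P_λ` and a function
`f : ℝ → ℂ`, the matrix `f(N) = Σ_λ f(λ) P_λ`, expressed through an orthonormal basis of
eigenvectors of `N`. -/
noncomputable def hermitianApply {n : ℕ} {N : Matrix (Fin n) (Fin n) ℂ}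
    (hN : N.IsHermitian) (f : ℝ → ℂ) : Matrix (Fin n) (Fin n) ℂ :=
  (hN.eigenvectorUnitary : Matrix (Fin n) (Fin n) ℂ) *
    Matrix.diagonal (fun i => f (hN.eigenvalues i)) *
      (hN.eigenvectorUnitary : Matrix (Fin n) (Fin n) ℂ)ᴴ




lemma sum_dotProduct' {n : ℕ} (x : Fin n → ℂ) {ι : Type*} [Fintype ι] (f : ι → Fin n → ℂ) :
    (∑ i, f i) ⬝ᵥ x = ∑ i, f i ⬝ᵥ x :=
  map_sum (AddMonoidHom.mk' (fun w : Fin n → ℂ => w ⬝ᵥ x)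
    (fun v w => add_dotProduct v w x)) _ Finset.univ

lemma common_eigenvector : ∀ (m : ℕ) (E : Type) (_ : AddCommGroup E), ∀ (_ : Module ℂ E),
    ∀ (_ : FiniteDimensional ℂ E) (_ : Nontrivial E) (f : Fin m → Module.End ℂ E),
    (∀ i j, Commute (f i) (f j)) →
    ∃ v : E, v ≠ 0 ∧ ∀ i, ∃ μ : ℂ, f i v = μ • v := by
  intro m
  induction m with
  | zero =>
    intro E _ _ _ _ f _
    obtain ⟨v, hv⟩ := exists_ne (0 : E)
    exact ⟨v, hv, fun i => i.elim0⟩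
  | succ m ih =>
    intro E _ _ _ _ f hcomm
    obtain ⟨μ, hμ⟩ := Module.End.exists_eigenvalue (f (Fin.last m))
    set W := Module.End.eigenspace (f (Fin.last m)) μ with hW
    haveI : Nontrivial W := Submodule.nontrivial_iff_ne_bot.mpr hμ
    have hmaps : ∀ (i : Fin m), ∀ x ∈ W, (f (Fin.castSucc i)) x ∈ W := by
      intro i x hx
      rw [hW, Module.End.mem_eigenspace_iff] at hx ⊢
      have hc := hcomm (Fin.last m) (Fin.castSucc i)
      calc (f (Fin.last m)) ((f (Fin.castSucc i)) x)
          = (f (Fin.castSucc i)) ((f (Fin.last m)) x) := by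
            have := congrFun (congrArg DFunLike.coe hc) x
            simpa [Module.End.mul_apply] using this
        _ = μ • (f (Fin.castSucc i)) x := by rw [hx, _root_.map_smul]
    set g : Fin m → Module.End ℂ W := fun i => (f (Fin.castSucc i)).restrict (hmaps i) with hg
    have hgcomm : ∀ i j, Commute (g i) (g j) := by
      intro i j
      apply LinearMap.ext
      intro x
      apply Subtype.ext
      have := congrFun (congrArg DFunLike.coe (hcomm (Fin.castSucc i) (Fin.castSucc j))) (x : E)
      simpa [hg, Module.End.mul_apply, LinearMap.restrict_apply] using this
    obtain ⟨v, hv0, hv⟩ := ih W inferInstance inferInstance inferInstance inferInstance g hgcomm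
    refine ⟨(v : E), by simpa using hv0, ?_⟩
    intro i
    induction i using Fin.lastCases with
    | last =>
      refine ⟨μ, ?_⟩
      have hvW : (v : E) ∈ Module.End.eigenspace (f (Fin.last m)) μ := v.2
      exact Module.End.mem_eigenspace_iff.mp hvW
    | cast i =>
      obtain ⟨μi, hμi⟩ := hv i
      refine ⟨μi, ?_⟩
      have := congrArg (Subtype.val) hμi
      simpa [hg, LinearMap.restrict_apply] using this

section helpers
variable {n k m : ℕ}

lemma star_dot_conj (x y : Fin n → ℂ) :
    star x ⬝ᵥ y = starRingEnd ℂ (star y ⬝ᵥ x) := by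
  simp [dotProduct, Pi.star_apply, map_sum, mul_comm]

lemma mulVec_sum' (A : Matrix (Fin n) (Fin n) ℂ) {ι : Type*} [Fintype ι] (f : ι → Fin n → ℂ) :
    A *ᵥ (∑ i, f i) = ∑ i, A *ᵥ f i :=
  map_sum (AddMonoidHom.mk' (fun w : Fin n → ℂ => A *ᵥ w)
    (fun v w => Matrix.mulVec_add A v w)) _ Finset.univ

lemma dotProduct_sum' (x : Fin n → ℂ) {ι : Type*} [Fintype ι] (f : ι → Fin n → ℂ) :
    x ⬝ᵥ (∑ i, f i) = ∑ i, x ⬝ᵥ f i :=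
  map_sum (AddMonoidHom.mk' (fun w : Fin n → ℂ => x ⬝ᵥ w)
    (fun v w => dotProduct_add x v w)) _ Finset.univ

end helpers

set_option maxHeartbeats 1000000 in
lemma exists_orthonormal_eigenvectors (n m : ℕ) (V : Fin m → Matrix (Fin n) (Fin n) ℂ)
    (hnorm : ∑ α, (V α)ᴴ * V α = 1) (hcomm : ∀ α β, V α * V β = V β * V α)
    (kraus : ∀ x y : Fin n → ℂ, ∑ α, star (V α *ᵥ x) ⬝ᵥ (V α *ᵥ y) = star x ⬝ᵥ y) :
    ∀ k, k ≤ n → ∃ ξ : Fin k → (Fin n → ℂ),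
      (∀ i j, star (ξ i) ⬝ᵥ ξ j = if i = j then 1 else 0) ∧
      ∀ α i, ∃ μ : ℂ, V α *ᵥ ξ i = μ • ξ i := by
  intro k
  induction k with
  | zero => intro _; exact ⟨Fin.elim0, fun i => i.elim0, fun α i => i.elim0⟩
  | succ k ih =>
    intro hk1
    obtain ⟨ξ, horto, heig⟩ := ih (le_of_lt (Nat.lt_of_succ_le hk1))
    -- eigenvalues
    choose lam hlam using heig
    -- the perp space
    set φ : (Fin n → ℂ) →ₗ[ℂ] (Fin k → ℂ) :=
      { toFun := fun x i => star (ξ i) ⬝ᵥ x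
        map_add' := by intro x y; funext i; simp [dotProduct_add]
        map_smul' := by intro a x; funext i; simp [dotProduct_smul] } with hφ
    set Sp : Submodule ℂ (Fin n → ℂ) := LinearMap.ker φ with hSp
    haveI : Nontrivial Sp := by
      apply Submodule.nontrivial_iff_ne_bot.mpr
      intro hbot
      have h1 := LinearMap.finrank_range_add_finrank_ker φ
      have h2 : Module.finrank ℂ (LinearMap.ker φ) = 0 := by rw [← hSp, hbot]; simp
      have h3 : Module.finrank ℂ (LinearMap.range φ) ≤ k := by
        simpa using (LinearMap.range φ).finrank_le
      simp [h2, Module.finrank_pi] at h1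
      omega
    -- projection onto perp
    set P : (Fin n → ℂ) → (Fin n → ℂ) :=
      fun y => y - ∑ i, (star (ξ i) ⬝ᵥ y) • ξ i with hP
    have hPmem : ∀ y, P y ∈ Sp := by
      intro y
      rw [hSp, LinearMap.mem_ker]
      funext j
      have : star (ξ j) ⬝ᵥ (P y) = 0 := by
        rw [hP]
        simp only [dotProduct_sub, dotProduct_sum', dotProduct_smul, horto]
        simp [Finset.sum_ite_eq', smul_eq_mul, mul_ite]
      simpa [hφ] using this
    have hPxi : ∀ i, P (ξ i) = 0 := by
      intro i
      rw [hP]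
      simp only [horto]
      rw [show (∑ j, (if j = i then (1:ℂ) else 0) • ξ j) = ξ i by
        simp [ite_smul, Finset.sum_ite_eq']]
      simp
    have hPsub : ∀ x y, P (x - y) = P x - P y := by
      intro x y
      simp only [hP, dotProduct_sub, sub_smul, Finset.sum_sub_distrib]
      abel
    have hPsmul : ∀ (a : ℂ) x, P (a • x) = a • P x := by
      intro a x
      simp only [hP, dotProduct_smul, smul_smul, smul_sub, Finset.smul_sum, smul_eq_mul]
    have hPadd : ∀ x y, P (x + y) = P x + P y := by
      intro x y
      simp only [hP, dotProduct_add, add_smul, Finset.sum_add_distrib]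
      abel
    have hPsum : ∀ {ι : Type} [Fintype ι] (f : ι → Fin n → ℂ),
        P (∑ i, f i) = ∑ i, P (f i) := by
      intro ι _ f
      exact map_sum (AddMonoidHom.mk' P hPadd) _ Finset.univ
    have hPVP : ∀ α y, P (V α *ᵥ P y) = P (V α *ᵥ y) := by
      intro α y
      have h1 : V α *ᵥ P y = V α *ᵥ y - ∑ i, ((star (ξ i) ⬝ᵥ y) * lam α i) • ξ i := by
        rw [hP]
        simp only [Matrix.mulVec_sub, mulVec_sum', Matrix.mulVec_smul, hlam, smul_smul]
      rw [h1, hPsub]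
      have h2 : P (∑ i, ((star (ξ i) ⬝ᵥ y) * lam α i) • ξ i) = 0 := by
        rw [hPsum]
        apply Finset.sum_eq_zero
        intro i _
        rw [hPsmul, hPxi, smul_zero]
      rw [h2, sub_zero]
    -- compressed endomorphisms
    set C : Fin m → Module.End ℂ Sp := fun α =>
      { toFun := fun x => ⟨P (V α *ᵥ (x : Fin n → ℂ)), hPmem _⟩
        map_add' := by
          intro x y
          apply Subtype.ext
          simp only [Submodule.coe_add, Matrix.mulVec_add, hPadd]
        map_smul' := by
          intro a x
          apply Subtype.ext
          simp only [Submodule.coe_smul, Matrix.mulVec_smul, hPsmul, RingHom.id_apply] } with hC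
    have hCcomm : ∀ α β, Commute (C α) (C β) := by
      intro α β
      apply LinearMap.ext
      intro x
      apply Subtype.ext
      have key : ∀ γ δ : Fin m,
          P (V γ *ᵥ P (V δ *ᵥ (x : Fin n → ℂ))) = P ((V γ * V δ) *ᵥ (x : Fin n → ℂ)) := by
        intro γ δ
        rw [hPVP, mulVec_mulVec]
      show P (V α *ᵥ (P (V β *ᵥ (x : Fin n → ℂ)))) = P (V β *ᵥ (P (V α *ᵥ (x : Fin n → ℂ))))
      rw [key, key, hcomm]
    obtain ⟨v, hv0, hveig⟩ := common_eigenvector m Sp inferInstance inferInstance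
      inferInstance inferInstance C hCcomm
    choose δ hδ using hveig
    set η : Fin n → ℂ := (v : Fin n → ℂ) with hη
    have hη0 : η ≠ 0 := by
      simpa [hη, Submodule.coe_eq_zero] using hv0
    have hηperp : ∀ i, star (ξ i) ⬝ᵥ η = 0 := by
      intro i
      have : φ η = 0 := v.2
      exact congrFun this i
    have hPVη : ∀ α, P (V α *ᵥ η) = δ α • η := by
      intro α
      have := congrArg (Subtype.val) (hδ α)
      simpa [hC] using this
    set c : Fin m → Fin k → ℂ := fun α i => star (ξ i) ⬝ᵥ (V α *ᵥ η) with hc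
    have hexp : ∀ α, V α *ᵥ η = δ α • η + ∑ i, c α i • ξ i := by
      intro α
      have := hPVη α
      rw [hP] at this
      rw [← this]
      simp [hc]
    -- the norm of η
    set r : ℝ := ∑ i, Complex.normSq (η i) with hrdef
    have hr : star η ⬝ᵥ η = (r : ℝ) := by
      rw [hrdef]
      push_cast
      simp [dotProduct, Pi.star_apply, Complex.normSq_eq_conj_mul_self]
    have hrpos : 0 < r := by
      rw [hrdef]
      obtain ⟨i, hi⟩ := Function.ne_iff.mp hη0
      exact Finset.sum_pos' (fun j _ => Complex.normSq_nonneg _)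
        ⟨i, Finset.mem_univ i, by simpa [Complex.normSq_pos] using hi⟩
    have hηξ : ∀ i, star η ⬝ᵥ ξ i = 0 := by
      intro i
      rw [star_dot_conj, hηperp, map_zero]
    -- identity I1
    have I1 : ∀ i, ∑ α, starRingEnd ℂ (lam α i) * lam α i = 1 := by
      intro i
      have h := kraus (ξ i) (ξ i)
      simp only [hlam, star_smul, smul_dotProduct, dotProduct_smul, smul_eq_mul, horto,
        if_pos, mul_one] at h
      simpa [mul_comm] using h
    -- identity I2
    have I2 : ∀ i, ∑ α, starRingEnd ℂ (lam α i) * c α i = 0 := by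
      intro i
      have h := kraus (ξ i) η
      rw [hηperp i] at h
      simp only [hlam, star_smul, smul_dotProduct, smul_eq_mul] at h
      simpa [hc] using h
    -- value of star η ⬝ᵥ V α η
    have hEtaV : ∀ α, star η ⬝ᵥ (V α *ᵥ η) = δ α * r := by
      intro α
      rw [hexp α]
      simp only [dotProduct_add, dotProduct_smul, dotProduct_sum', smul_eq_mul, hηξ, hr,
        mul_zero, Finset.sum_const_zero, add_zero]
    -- identity I3
    have I3 : (∑ α, starRingEnd ℂ (δ α) * δ α) * r + ∑ α, ∑ i,
        starRingEnd ℂ (c α i) * c α i = r := by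
      have h := kraus η η
      rw [hr] at h
      have hterm : ∀ α, star (V α *ᵥ η) ⬝ᵥ (V α *ᵥ η)
          = starRingEnd ℂ (δ α) * δ α * r + ∑ i, starRingEnd ℂ (c α i) * c α i := by
        intro α
        nth_rewrite 1 [hexp α]
        rw [star_add, star_smul, add_dotProduct, smul_dotProduct, star_sum]
        rw [show (∑ i, star (c α i • ξ i)) ⬝ᵥ (V α *ᵥ η)
            = ∑ i, (star (c α i • ξ i)) ⬝ᵥ (V α *ᵥ η) from
          sum_dotProduct' _ _]
        simp only [star_smul, smul_dotProduct, smul_eq_mul, hEtaV]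
        simp only [hc, RCLike.star_def, mul_assoc]
      rw [Finset.sum_congr rfl (fun α _ => hterm α)] at h
      rw [Finset.sum_add_distrib, ← Finset.sum_mul] at h
      exact h
    -- identity I4
    have I4 : ∀ α β i, δ β * c α i + lam α i * c β i = δ α * c β i + lam β i * c α i := by
      have hexp2 : ∀ α β i, star (ξ i) ⬝ᵥ (V α *ᵥ (V β *ᵥ η)) = δ β * c α i + lam α i * c β i := by
        intro α β i
        rw [hexp β, Matrix.mulVec_add, Matrix.mulVec_smul, mulVec_sum']
        simp only [Matrix.mulVec_smul, hlam, dotProduct_add, dotProduct_smul, dotProduct_sum',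
          smul_eq_mul, smul_smul]
        rw [show ∀ z : Fin k → ℂ, (∑ j, z j * (star (ξ i) ⬝ᵥ ξ j)) = z i from by
          intro z; simp [horto, mul_ite, Finset.sum_ite_eq']]
        ring_nf
        rfl
      intro α β i
      have hmm : V α *ᵥ (V β *ᵥ η) = V β *ᵥ (V α *ᵥ η) := by
        rw [mulVec_mulVec, mulVec_mulVec, hcomm]
      have h1 := hexp2 α β i
      rw [hmm] at h1
      rw [hexp2 β α i] at h1
      exact h1.symm
    -- real versions
    set Dreal : ℝ := ∑ α, Complex.normSq (δ α) with hD
    set Creal : ℝ := ∑ α, ∑ i, Complex.normSq (c α i) with hCr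
    have hconjmul : ∀ z : ℂ, starRingEnd ℂ z * z = (Complex.normSq z : ℂ) := by
      intro z
      rw [mul_comm, Complex.mul_conj]
    have hI3' : Dreal * r + Creal = r := by
      have h := I3
      rw [Finset.sum_congr rfl (fun α _ => hconjmul (δ α)),
        Finset.sum_congr rfl (fun α (_ : α ∈ Finset.univ) =>
          Finset.sum_congr rfl (fun i _ => hconjmul (c α i)))] at h
      have : ((Dreal * r + Creal : ℝ) : ℂ) = ((r : ℝ) : ℂ) := by
        push_cast
        rw [hD, hCr]
        push_cast
        exact h
      exact_mod_cast this
    have hCnonneg : 0 ≤ Creal := by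
      rw [hCr]
      exact Finset.sum_nonneg fun α _ => Finset.sum_nonneg fun i _ => Complex.normSq_nonneg _
    have hI1' : ∀ i, ∑ α, Complex.normSq (lam α i) = 1 := by
      intro i
      have h := I1 i
      rw [Finset.sum_congr rfl (fun α _ => hconjmul (lam α i))] at h
      exact_mod_cast h
    have hCzero_of : Creal = 0 → ∀ α i, c α i = 0 := by
      intro h0 α i
      have h1 : ∀ α ∈ Finset.univ, (0:ℝ) ≤ ∑ i, Complex.normSq (c α i) :=
        fun α _ => Finset.sum_nonneg fun i _ => Complex.normSq_nonneg _
      have h2 := (Finset.sum_eq_zero_iff_of_nonneg h1).mp (hCr ▸ h0) α (Finset.mem_univ α)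
      have h3 := (Finset.sum_eq_zero_iff_of_nonneg
        (fun i _ => Complex.normSq_nonneg (c α i))).mp h2 i (Finset.mem_univ i)
      exact Complex.normSq_eq_zero.mp h3
    have hc0 : ∀ α i, c α i = 0 := by
      have hcol : ∀ i α, c α i = 0 := by
        intro i
        by_cases hA : ∀ α, δ α = lam α i
        · have hD1 : Dreal = 1 := by
            have he : ∑ α, Complex.normSq (δ α) = ∑ α, Complex.normSq (lam α i) :=
              Finset.sum_congr rfl fun α _ => by rw [hA α]
            rw [hD, he, hI1' i]
          have hC0 : Creal = 0 := by
            have := hI3'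
            rw [hD1, one_mul] at this
            linarith
          exact fun α => hCzero_of hC0 α i
        · push_neg at hA
          obtain ⟨α₀, hα₀⟩ := hA
          have hd : δ α₀ - lam α₀ i ≠ 0 := sub_ne_zero.mpr hα₀
          set κ : ℂ := c α₀ i / (δ α₀ - lam α₀ i) with hκdef
          have hprop : ∀ β, c β i = κ * (δ β - lam β i) := by
            intro β
            have h4 := I4 α₀ β i
            have h5 : c β i * (δ α₀ - lam α₀ i) = c α₀ i * (δ β - lam β i) := by
              linear_combination -h4
            rw [hκdef, div_mul_eq_mul_div, eq_div_iff hd]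
            linear_combination h5
          by_cases hκ : κ = 0
          · intro β
            rw [hprop β, hκ, zero_mul]
          · have h6 : ∑ α, starRingEnd ℂ (lam α i) * δ α = 1 := by
              have h7 := I2 i
              have h8 : ∑ α, starRingEnd ℂ (lam α i) * c α i
                  = κ * ((∑ α, starRingEnd ℂ (lam α i) * δ α)
                    - ∑ α, starRingEnd ℂ (lam α i) * lam α i) := by
                rw [mul_sub, Finset.mul_sum, Finset.mul_sum, ← Finset.sum_sub_distrib]
                exact Finset.sum_congr rfl fun α _ => by rw [hprop α]; ring
              rw [h8, I1 i] at h7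
              rcases mul_eq_zero.mp h7 with h | h
              · exact absurd h hκ
              · exact sub_eq_zero.mp h
            have h8 : (1:ℝ) ≤ Dreal := by
              have h9 : ‖∑ α, starRingEnd ℂ (lam α i) * δ α‖
                  ≤ ∑ α, ‖lam α i‖ * ‖δ α‖ := by
                refine le_trans (norm_sum_le _ _) ?_
                apply le_of_eq
                exact Finset.sum_congr rfl fun α _ => by
                  rw [norm_mul, Complex.norm_conj]
              have habs1 : ‖∑ α, starRingEnd ℂ (lam α i) * δ α‖ = 1 := by
                rw [h6]
                simp
              have h9' : (1:ℝ) ≤ ∑ α, ‖lam α i‖ * ‖δ α‖ := by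
                rw [habs1] at h9
                exact h9
              have h10 : (∑ α, ‖lam α i‖ * ‖δ α‖)^2
                  ≤ (∑ α, ‖lam α i‖^2) * (∑ α, ‖δ α‖^2) :=
                Finset.sum_mul_sq_le_sq_mul_sq Finset.univ
                  (fun α => ‖lam α i‖) (fun α => ‖δ α‖)
              have h11 : ∑ α, ‖lam α i‖^2 = 1 := by
                rw [← hI1' i]
                exact Finset.sum_congr rfl fun α _ => Complex.sq_norm _
              have h12 : ∑ α, ‖δ α‖^2 = Dreal := by
                rw [hD]
                exact Finset.sum_congr rfl fun α _ => Complex.sq_norm _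
              rw [h11, h12, one_mul] at h10
              nlinarith [h9', h10]
            have hC0 : Creal = 0 := by
              have hprod : 0 ≤ (Dreal - 1) * r := mul_nonneg (by linarith) hrpos.le
              nlinarith [hI3', hCnonneg, hprod]
            exact fun β => hCzero_of hC0 β i
      exact fun α i => hcol i α
    have hfin : ∀ α, V α *ᵥ η = δ α • η := by
      intro α
      rw [hexp α]
      simp [hc0]
    -- normalize η
    set s : ℝ := (Real.sqrt r)⁻¹ with hs
    set η' : Fin n → ℂ := (s : ℂ) • η with hη'
    have hs2 : s^2 * r = 1 := by
      rw [hs]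
      rw [show ((Real.sqrt r)⁻¹)^2 = (Real.sqrt r ^ 2)⁻¹ by rw [inv_pow]]
      rw [Real.sq_sqrt hrpos.le]
      field_simp
    have hη'η' : star η' ⬝ᵥ η' = 1 := by
      rw [hη', star_smul, smul_dotProduct, dotProduct_smul, hr]
      simp only [smul_eq_mul, RCLike.star_def, Complex.conj_ofReal]
      rw [show ((s:ℂ) * ((s:ℂ) * (r:ℂ))) = ((s^2 * r : ℝ) : ℂ) by push_cast; ring, hs2]
      norm_num
    have hξη' : ∀ i, star (ξ i) ⬝ᵥ η' = 0 := by
      intro i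
      rw [hη', dotProduct_smul, hηperp i, smul_zero]
    have hη'ξ : ∀ i, star η' ⬝ᵥ ξ i = 0 := by
      intro i
      rw [star_dot_conj, hξη' i, map_zero]
    have hVη' : ∀ α, V α *ᵥ η' = δ α • η' := by
      intro α
      rw [hη', Matrix.mulVec_smul, hfin α, smul_comm]
    refine ⟨Fin.snoc ξ η', ?_, ?_⟩
    · intro i j
      induction i using Fin.lastCases with
      | last =>
        induction j using Fin.lastCases with
        | last => simpa [Fin.snoc_last] using hη'η'
        | cast j =>
          rw [if_neg (Fin.castSucc_lt_last j).ne']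
          simpa [Fin.snoc_last, Fin.snoc_castSucc] using hη'ξ j
      | cast i =>
        induction j using Fin.lastCases with
        | last =>
          rw [if_neg (Fin.castSucc_lt_last i).ne]
          simpa [Fin.snoc_last, Fin.snoc_castSucc] using hξη' i
        | cast j =>
          rw [Fin.snoc_castSucc, Fin.snoc_castSucc, horto i j]
          simp [Fin.castSucc_inj]
    · intro α i
      induction i using Fin.lastCases with
      | last => exact ⟨δ α, by simpa [Fin.snoc_last] using hVη' α⟩
      | cast i => exact ⟨lam α i, by simpa [Fin.snoc_castSucc] using hlam α i⟩

lemma kraus_identity {n m : ℕ} (V : Fin m → Matrix (Fin n) (Fin n) ℂ)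
    (hnorm : ∑ α, (V α)ᴴ * V α = 1) (x y : Fin n → ℂ) :
    ∑ α, star (V α *ᵥ x) ⬝ᵥ (V α *ᵥ y) = star x ⬝ᵥ y := by
  have h1 : ∀ α, star (V α *ᵥ x) ⬝ᵥ (V α *ᵥ y) = star x ⬝ᵥ (((V α)ᴴ * V α) *ᵥ y) := by
    intro α
    rw [← mulVec_mulVec, star_mulVec, ← dotProduct_mulVec]
  simp_rw [h1]
  have h2 : ∑ α, star x ⬝ᵥ (((V α)ᴴ * V α) *ᵥ y) = star x ⬝ᵥ ((∑ α, (V α)ᴴ * V α) *ᵥ y) := by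
    have e1 : (∑ α, (V α)ᴴ * V α) *ᵥ y = ∑ α, ((V α)ᴴ * V α) *ᵥ y :=
      map_sum (AddMonoidHom.mk' (fun A : Matrix (Fin n) (Fin n) ℂ => A *ᵥ y)
        (fun A B => Matrix.add_mulVec A B y)) _ Finset.univ
    have e2 : star x ⬝ᵥ (∑ α, ((V α)ᴴ * V α) *ᵥ y) = ∑ α, star x ⬝ᵥ (((V α)ᴴ * V α) *ᵥ y) :=
      map_sum (AddMonoidHom.mk' (fun w : Fin n → ℂ => star x ⬝ᵥ w)
        (fun v w => dotProduct_add (star x) v w)) _ Finset.univ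
    rw [e1, e2]
  rw [h2, hnorm, one_mulVec]

lemma hermitianApply_of_unitary_diag {n : ℕ} (U : Matrix (Fin n) (Fin n) ℂ)
    (hU1 : Uᴴ * U = 1) (hU2 : U * Uᴴ = 1) (g : Fin n → ℝ)
    (hN : (U * Matrix.diagonal (fun i => (g i : ℂ)) * Uᴴ).IsHermitian) (f : ℝ → ℂ) :
    hermitianApply hN f = U * Matrix.diagonal (fun i => f (g i)) * Uᴴ := by
  set N := U * Matrix.diagonal (fun i => (g i : ℂ)) * Uᴴ with hNdef
  set W := (hN.eigenvectorUnitary : Matrix (Fin n) (Fin n) ℂ) with hWdef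
  have hW1 : Wᴴ * W = 1 := by
    simpa [star_eq_conjTranspose] using (Unitary.star_mul_self_of_mem (hN.eigenvectorUnitary).2)
  have hW2 : W * Wᴴ = 1 := by
    simpa [star_eq_conjTranspose] using (Unitary.mul_star_self_of_mem (hN.eigenvectorUnitary).2)
  set M := Uᴴ * W with hMdef
  have hspec : N = W * Matrix.diagonal (RCLike.ofReal ∘ hN.eigenvalues) * Wᴴ := by
    simpa [star_eq_conjTranspose] using hN.spectral_theorem
  have h1 : Matrix.diagonal (fun i => (g i : ℂ)) * M = Uᴴ * N * W := by
    rw [hNdef, hMdef, ← mul_assoc (Matrix.diagonal fun i => (g i : ℂ)) Uᴴ W]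
    congr 1
    rw [← mul_assoc, ← mul_assoc, hU1, one_mul]
  have hNW : N * W = W * Matrix.diagonal (RCLike.ofReal ∘ hN.eigenvalues) := by
    conv_lhs => rw [hspec]
    rw [mul_assoc, hW1, mul_one]
  have h2 : M * Matrix.diagonal (RCLike.ofReal ∘ hN.eigenvalues) = Uᴴ * N * W := by
    rw [hMdef, mul_assoc, ← hNW, ← mul_assoc]
  have key : ∀ i j, (g i : ℂ) * M i j = M i j * (hN.eigenvalues j : ℂ) := by
    have h3 := h1.trans h2.symm
    intro i j
    have h4 := congrFun (congrFun h3 i) j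
    simpa [Matrix.diagonal_mul, Matrix.mul_diagonal, Function.comp] using h4
  have key2 : Matrix.diagonal (fun i => f (g i)) * M
      = M * Matrix.diagonal (fun j => f (hN.eigenvalues j)) := by
    ext i j
    simp only [Matrix.diagonal_mul, Matrix.mul_diagonal]
    rcases eq_or_ne (M i j) 0 with h | h
    · simp [h]
    · have h5 : M i j * ((g i : ℂ) - (hN.eigenvalues j : ℂ)) = 0 := by
        linear_combination key i j
      rcases mul_eq_zero.mp h5 with h' | h'
      · exact absurd h' h
      · have : (g i : ℂ) = (hN.eigenvalues j : ℂ) := sub_eq_zero.mp h'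
        have : g i = hN.eigenvalues j := by exact_mod_cast this
        rw [this, mul_comm]
  have hWU : W = U * M := by rw [hMdef, ← mul_assoc, hU2, one_mul]
  calc hermitianApply hN f = W * Matrix.diagonal (fun j => f (hN.eigenvalues j)) * Wᴴ := rfl
    _ = U * (M * Matrix.diagonal (fun j => f (hN.eigenvalues j)) * Mᴴ) * Uᴴ := by
        rw [hWU]; simp only [Matrix.conjTranspose_mul, Matrix.mul_assoc]
    _ = U * (Matrix.diagonal (fun i => f (g i)) * (M * Mᴴ)) * Uᴴ := by
        rw [← key2]; simp only [Matrix.mul_assoc]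
    _ = U * Matrix.diagonal (fun i => f (g i)) * Uᴴ := by
        have hMM : M * Mᴴ = 1 := by
          rw [hMdef, Matrix.conjTranspose_mul, conjTranspose_conjTranspose,
            mul_assoc, ← mul_assoc W, hW2, one_mul, hU1]
        rw [hMM, mul_one, mul_assoc]

/-- For Kraus operators, being functions of a single Hermitian matrix (non-demolition,
Condition A) is equivalent to mutual commutation (Condition B). -/
theorem nondemolition_iff_commuting (n m : ℕ)
    (V : Fin m → Matrix (Fin n) (Fin n) ℂ)
    (hnorm : ∑ α, (V α)ᴴ * V α = 1) :
    (∃ N : Matrix (Fin n) (Fin n) ℂ, ∃ hN : N.IsHermitian, ∃ f : Fin m → ℝ → ℂ,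
        ∀ α, V α = hermitianApply hN (f α)) ↔
      (∀ α β, V α * V β = V β * V α) := by
  constructor
  · rintro ⟨N, hN, f, hf⟩ α β
    have hW : (hN.eigenvectorUnitary : Matrix (Fin n) (Fin n) ℂ)ᴴ *
        (hN.eigenvectorUnitary : Matrix (Fin n) (Fin n) ℂ) = 1 := by
      simpa [star_eq_conjTranspose] using
        (Unitary.star_mul_self_of_mem (hN.eigenvectorUnitary).2)
    rw [hf α, hf β]
    unfold hermitianApply
    set W := (hN.eigenvectorUnitary : Matrix (Fin n) (Fin n) ℂ)
    have key : ∀ a b : Fin n → ℂ,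
        (W * diagonal a * Wᴴ) * (W * diagonal b * Wᴴ) = W * diagonal (a * b) * Wᴴ := by
      intro a b
      rw [mul_assoc, mul_assoc]
      rw [show Wᴴ * (W * diagonal b * Wᴴ) = diagonal b * Wᴴ by
        rw [← mul_assoc, ← mul_assoc, hW, one_mul]]
      rw [← mul_assoc, ← mul_assoc, mul_assoc W, diagonal_mul_diagonal, mul_assoc]
      rw [mul_assoc]; rfl
    rw [key, key, mul_comm]
  · intro hcomm
    obtain ⟨ξ, horto, heig⟩ := exists_orthonormal_eigenvectors n m V hnorm hcomm
      (kraus_identity V hnorm) n le_rfl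
    choose lam hlam using heig
    set U : Matrix (Fin n) (Fin n) ℂ := Matrix.of fun p i => ξ i p with hUdef
    have hU1 : Uᴴ * U = 1 := by
      ext i j
      have := horto i j
      simpa [Matrix.mul_apply, Matrix.conjTranspose_apply, Matrix.one_apply, dotProduct,
        Pi.star_apply, hUdef] using this
    have hU2 : U * Uᴴ = 1 := mul_eq_one_comm.mp hU1
    have hdiag : ∀ α, V α = U * diagonal (lam α) * Uᴴ := by
      intro α
      have h : V α * U = U * diagonal (lam α) := by
        ext p i
        have := congrFun (hlam α i) p
        rw [Matrix.mul_diagonal]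
        simpa [Matrix.mul_apply, Matrix.mulVec, dotProduct, hUdef, mul_comm] using this
      calc V α = V α * (U * Uᴴ) := by rw [hU2, mul_one]
        _ = (V α * U) * Uᴴ := by rw [mul_assoc]
        _ = U * diagonal (lam α) * Uᴴ := by rw [h]
    set g : Fin n → ℝ := fun i => ((i : ℕ) : ℝ) with hgdef
    have hN : (U * Matrix.diagonal (fun i => (g i : ℂ)) * Uᴴ).IsHermitian := by
      have hdstar : star (fun i => (g i : ℂ)) = fun i => (g i : ℂ) := by
        funext i
        simp [Pi.star_apply, Complex.conj_ofReal]
      show (U * Matrix.diagonal (fun i => (g i : ℂ)) * Uᴴ)ᴴ = _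
      rw [Matrix.conjTranspose_mul, Matrix.conjTranspose_mul, Matrix.conjTranspose_conjTranspose,
        Matrix.diagonal_conjTranspose, hdstar, Matrix.mul_assoc]
    refine ⟨U * Matrix.diagonal (fun i => (g i : ℂ)) * Uᴴ, hN,
      fun α t => if h : ∃ j : Fin n, g j = t then lam α h.choose else 0, fun α => ?_⟩
    rw [hermitianApply_of_unitary_diag U hU1 hU2 g hN]
    rw [hdiag α]
    have hfval : ∀ i : Fin n,
        (if h : ∃ j : Fin n, g j = g i then lam α h.choose else 0) = lam α i := by
      intro i
      have hex : ∃ j : Fin n, g j = g i := ⟨i, rfl⟩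
      simp only [dif_pos hex]
      congr 1
      have hspec := hex.choose_spec
      have hcast : ((hex.choose : ℕ) : ℝ) = ((i : ℕ) : ℝ) := hspec
      exact Fin.ext (Nat.cast_injective hcast)
    have hfun : (fun i : Fin n => if h : ∃ j : Fin n, g j = g i then lam α h.choose else 0)
        = lam α := funext hfval
    show U * Matrix.diagonal (lam α) * Uᴴ = U * Matrix.diagonal
      (fun i : Fin n => if h : ∃ j : Fin n, g j = g i then lam α h.choose else 0) * Uᴴ
    rw [hfun]
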